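/- Let n ≥ 3 and P = ℚ[X₁,…,X_{2n}]. Let 𝔟⁻ be the ideal of P generated by all Xᵢ² (i = 1,…,2n) and all e_{n−1}(Xᵢ : i ∈ T) for subsets T ⊆ {2,…,2n} with |T| = n, where e_{n−1} is the elementary symmetric polynomial of degree n−1. Then for every a₁,…,a_{2n} ∈ ℚ, one has (a₁X₁ + ⋯ + a_{2n}X_{2n})^{n−1} ∈ 𝔟⁻ if and only if a₁ · ∏_{k∈K} a_k = 0 for every subset K ⊆ {2,…,2n} with |K| = n−2. -/

import Mathlib

open MvPolynomial Finset

noncomputable section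

/-- e_j(Xᵢ : i ∈ I), the elementary symmetric polynomial in the variables indexed by I. -/
def esF {N : ℕ} (I : Finset (Fin N)) (j : ℕ) : MvPolynomial (Fin N) ℚ :=
  ∑ J ∈ powersetCard j I, ∏ i ∈ J, X i

/-- The 0/1 indicator finsupp of a finite set of variables. -/
def ind {N : ℕ} (S : Finset (Fin N)) : Fin N →₀ ℕ := ∑ i ∈ S, Finsupp.single i 1

lemma ind_apply {N : ℕ} (S : Finset (Fin N)) (i : Fin N) :
    ind S i = if i ∈ S then 1 else 0 := by
  classical
  rw [ind, Finset.sum_apply']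
  simp [Finsupp.single_apply]

lemma ind_support {N : ℕ} (S : Finset (Fin N)) : (ind S).support = S := by
  ext i
  rw [Finsupp.mem_support_iff, ind_apply]
  split <;> simp_all

lemma monomial_ind {N : ℕ} (S : Finset (Fin N)) :
    (monomial (ind S) (1 : ℚ)) = ∏ i ∈ S, X i := by
  rw [← prod_X_pow_eq_monomial, ind_support]
  apply Finset.prod_congr rfl
  intro i hi
  rw [ind_apply, if_pos hi, pow_one]

lemma ind_le_iff {N : ℕ} (S T : Finset (Fin N)) : ind S ≤ ind T ↔ S ⊆ T := by
  constructor
  · intro h i hi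
    have := h i
    rw [ind_apply, ind_apply, if_pos hi] at this
    by_contra hc
    rw [if_neg hc] at this; omega
  · intro h i
    rw [ind_apply, ind_apply]
    split
    · rw [if_pos (h (by assumption))]
    · omega

lemma ind_sum {N : ℕ} (S : Finset (Fin N)) : ∑ i, ind S i = S.card := by
  simp [ind_apply, Finset.sum_ite_mem, Finset.univ_inter]

/-- The inversion coefficients. -/
def cc (n i : ℕ) : ℚ :=
  (-1) ^ (n - 1 - i) * i.factorial * (n - 1 - i).factorial / n.factorial

lemma cc_rec (n i : ℕ) (hn : 1 ≤ n) (h : i ≤ n - 1) :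
    ((n - 1 - i : ℕ) : ℚ) * cc n (i + 1) + ((i + 1 : ℕ) : ℚ) * cc n i
      = if i = n - 1 then 1 else 0 := by
  rcases eq_or_lt_of_le h with he | hlt
  · subst he
    rw [if_pos rfl]
    simp only [Nat.sub_self, Nat.cast_zero, zero_mul, zero_add, cc]
    have h1 : (n - 1) + 1 = n := by omega
    rw [h1]
    simp only [pow_zero, Nat.factorial_zero, Nat.cast_one, one_mul, mul_one]
    rw [div_eq_inv_mul, ← mul_assoc, ← Nat.mul_factorial_pred (Nat.one_le_iff_ne_zero.mp hn)]
    push_cast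
    have h2 : ((n - 1).factorial : ℚ) ≠ 0 := Nat.cast_ne_zero.mpr (n - 1).factorial_ne_zero
    have h3 : (n : ℚ) ≠ 0 := Nat.cast_ne_zero.mpr (by omega)
    field_simp
  · rw [if_neg (by omega)]
    obtain ⟨p, hp⟩ : ∃ p, n - 1 = i + 1 + p := ⟨n - 1 - (i + 1), by omega⟩
    have e1 : n - 1 - i = p + 1 := by omega
    have e2 : n - 1 - (i + 1) = p := by omega
    rw [cc, cc, e1, e2]
    have h2 : (n.factorial : ℚ) ≠ 0 := Nat.cast_ne_zero.mpr n.factorial_ne_zero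
    field_simp
    push_cast [Nat.factorial_succ]
    ring

lemma esF_erase {N n : ℕ} (hn : 1 ≤ n) (T : Finset (Fin N)) (hT : T.card = n) :
    esF T (n - 1) = ∑ j ∈ T, monomial (ind (T.erase j)) (1 : ℚ) := by
  rw [esF]
  rw [Finset.sum_congr rfl (fun J _ => (monomial_ind J).symm)]
  refine (Finset.sum_bij (fun j _ => T.erase j) ?_ ?_ ?_ ?_).symm
  · intro j hj
    rw [mem_powersetCard]
    exact ⟨erase_subset _ _, by rw [card_erase_of_mem hj, hT]⟩
  · intro x hx y hy hxy
    by_contra hne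
    have h1 : x ∈ T.erase y := mem_erase.mpr ⟨hne, hx⟩
    have h2 : T.erase x = T.erase y := hxy
    rw [← h2] at h1
    exact notMem_erase x T h1
  · intro J hJ
    rw [mem_powersetCard] at hJ
    obtain ⟨hJT, hJc⟩ := hJ
    have hcard : (T \ J).card = 1 := by
      rw [card_sdiff_of_subset hJT, hT, hJc]; omega
    obtain ⟨j, hj⟩ := Finset.card_eq_one.mp hcard
    have hjT : j ∈ T := (Finset.mem_sdiff.mp (hj ▸ Finset.mem_singleton_self j)).1
    have hjJ : j ∉ J := (Finset.mem_sdiff.mp (hj ▸ Finset.mem_singleton_self j)).2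
    refine ⟨j, hjT, ?_⟩
    refine (Finset.eq_of_subset_of_card_le ?_ ?_).symm
    · intro x hx
      exact mem_erase.mpr ⟨fun h => hjJ (h ▸ hx), hJT hx⟩
    · rw [card_erase_of_mem hjT, hT, hJc]
  · intro J hJ; rfl

lemma key_identity (n : ℕ) (hn : 3 ≤ n) (z : Fin (2 * n)) (S : Finset (Fin (2 * n)))
    (hzS : z ∉ S) (hSc : S.card = n - 1) :
    ∑ T ∈ powersetCard n (univ.erase z), C (cc n ((T ∩ S).card)) * esF T (n - 1)
      = monomial (ind S) (1 : ℚ) := by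
  set W : Finset (Fin (2 * n)) := univ.erase z with hW
  have hWc : W.card = 2 * n - 1 := by
    rw [hW, card_erase_of_mem (mem_univ z), card_univ, Fintype.card_fin]
  have hSW : S ⊆ W := fun x hx =>
    mem_erase.mpr ⟨fun h => hzS (h ▸ hx), mem_univ x⟩
  have step1 : ∀ T ∈ powersetCard n W,
      C (cc n ((T ∩ S).card)) * esF T (n - 1)
        = ∑ j ∈ T, C (cc n ((T ∩ S).card)) * monomial (ind (T.erase j)) (1 : ℚ) := by
    intro T hT
    rw [esF_erase (by omega) T (mem_powersetCard.mp hT).2, Finset.mul_sum]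
  rw [Finset.sum_congr rfl step1]
  have step2 : ∑ T ∈ powersetCard n W, ∑ j ∈ T,
        C (cc n ((T ∩ S).card)) * monomial (ind (T.erase j)) (1 : ℚ)
      = ∑ J ∈ powersetCard (n - 1) W, ∑ j ∈ W \ J,
        C (cc n ((insert j J ∩ S).card)) * monomial (ind J) (1 : ℚ) := by
    rw [Finset.sum_sigma', Finset.sum_sigma']
    refine Finset.sum_nbij' (fun x => ⟨x.1.erase x.2, x.2⟩)
      (fun x => ⟨insert x.2 x.1, x.2⟩) ?_ ?_ ?_ ?_ ?_
    · rintro ⟨T, j⟩ hx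
      rw [Finset.mem_sigma, mem_powersetCard] at hx ⊢
      obtain ⟨⟨hTW, hTc⟩, hj⟩ := hx
      refine ⟨⟨(erase_subset _ _).trans hTW, by rw [card_erase_of_mem hj, hTc]⟩, ?_⟩
      exact Finset.mem_sdiff.mpr ⟨hTW hj, notMem_erase _ _⟩
    · rintro ⟨J, j⟩ hx
      rw [Finset.mem_sigma, mem_powersetCard] at hx ⊢
      obtain ⟨⟨hJW, hJc⟩, hj⟩ := hx
      rw [Finset.mem_sdiff] at hj
      refine ⟨⟨insert_subset hj.1 hJW, ?_⟩, mem_insert_self _ _⟩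
      rw [card_insert_of_notMem hj.2, hJc]; omega
    · rintro ⟨T, j⟩ hx
      rw [Finset.mem_sigma] at hx
      simp only [Sigma.mk.inj_iff]
      exact ⟨insert_erase hx.2, HEq.rfl⟩
    · rintro ⟨J, j⟩ hx
      rw [Finset.mem_sigma] at hx
      have hj := Finset.mem_sdiff.mp hx.2
      simp only [Sigma.mk.inj_iff]
      exact ⟨erase_insert hj.2, HEq.rfl⟩
    · rintro ⟨T, j⟩ hx
      rw [Finset.mem_sigma] at hx
      simp only
      rw [insert_erase hx.2]
  rw [step2]
  have step3 : ∀ J ∈ powersetCard (n - 1) W,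
      ∑ j ∈ W \ J, C (cc n ((insert j J ∩ S).card)) * monomial (ind J) (1 : ℚ)
        = (if J = S then 1 else 0) * monomial (ind J) (1 : ℚ) := by
    intro J hJ
    rw [mem_powersetCard] at hJ
    obtain ⟨hJW, hJc⟩ := hJ
    rw [← Finset.sum_mul, ← map_sum]
    congr 1
    set i := (J ∩ S).card with hi
    have hiJ : i ≤ n - 1 := by
      rw [hi, ← hJc]; exact card_le_card (inter_subset_left)
    have hsplit : W \ J = (S \ J) ∪ ((W \ J) \ S) := by
      ext x
      simp only [Finset.mem_sdiff, Finset.mem_union]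
      constructor
      · rintro ⟨hxW, hxJ⟩
        by_cases hxS : x ∈ S
        · exact Or.inl ⟨hxS, hxJ⟩
        · exact Or.inr ⟨⟨hxW, hxJ⟩, hxS⟩
      · rintro (⟨hxS, hxJ⟩ | ⟨⟨hxW, hxJ⟩, _⟩)
        · exact ⟨hSW hxS, hxJ⟩
        · exact ⟨hxW, hxJ⟩
    have hdisj : Disjoint (S \ J) ((W \ J) \ S) := by
      rw [Finset.disjoint_left]
      rintro x hx hy
      exact (Finset.mem_sdiff.mp hy).2 (Finset.mem_sdiff.mp hx).1
    rw [hsplit, Finset.sum_union hdisj]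
    have hval1 : ∀ j ∈ S \ J, cc n ((insert j J ∩ S).card) = cc n (i + 1) := by
      intro j hj
      rw [Finset.mem_sdiff] at hj
      have : insert j J ∩ S = insert j (J ∩ S) := by
        rw [Finset.insert_inter_distrib, Finset.insert_eq_self.mpr hj.1]
      rw [this, card_insert_of_notMem (fun h => hj.2 (Finset.mem_inter.mp h).1)]
    have hval2 : ∀ j ∈ (W \ J) \ S, cc n ((insert j J ∩ S).card) = cc n i := by
      intro j hj
      rw [Finset.mem_sdiff] at hj
      have : insert j J ∩ S = J ∩ S := by
        rw [Finset.insert_inter_of_notMem hj.2]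
      rw [this]
    rw [Finset.sum_congr rfl hval1, Finset.sum_congr rfl hval2,
      Finset.sum_const, Finset.sum_const]
    have hc1 : (S \ J).card = n - 1 - i := by
      have := Finset.card_sdiff_add_card_inter S J
      rw [Finset.inter_comm] at this
      omega
    have hc2 : ((W \ J) \ S).card = i + 1 := by
      have hWJ : (W \ J).card = n := by
        rw [card_sdiff_of_subset hJW, hWc, hJc]; omega
      have hWJS : (W \ J) ∩ S = S \ J := by
        ext x
        simp only [Finset.mem_inter, Finset.mem_sdiff]
        constructor
        · rintro ⟨⟨hxW, hxJ⟩, hxS⟩; exact ⟨hxS, hxJ⟩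
        · rintro ⟨hxS, hxJ⟩; exact ⟨⟨hSW hxS, hxJ⟩, hxS⟩
      have := Finset.card_sdiff_add_card_inter (W \ J) S
      rw [hWJS, hc1] at this
      omega
    rw [hc1, hc2, nsmul_eq_mul, nsmul_eq_mul]
    rw [cc_rec n i (by omega) hiJ]
    by_cases hJS : J = S
    · rw [if_pos (by rw [hi, hJS, Finset.inter_self, hSc] : i = n - 1), if_pos hJS, map_one]
    · have hne : ¬ i = n - 1 := by
        intro hieq
        apply hJS
        have h1 : J ∩ S = J := by
          apply Finset.eq_of_subset_of_card_le inter_subset_left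
          rw [← hi, hieq, hJc]
        have h2 : J ⊆ S := by rw [← h1]; exact inter_subset_right
        exact Finset.eq_of_subset_of_card_le h2 (by rw [hJc, hSc])
      rw [if_neg hne, if_neg hJS, map_zero]
  rw [Finset.sum_congr rfl step3]
  have hSmem : S ∈ powersetCard (n - 1) W := mem_powersetCard.mpr ⟨hSW, hSc⟩
  rw [Finset.sum_eq_single_of_mem S hSmem]
  · rw [if_pos rfl, one_mul]
  · intro J _ hJS
    rw [if_neg hJS, zero_mul]

lemma coeff_mem_span {n : ℕ} (hn : 3 ≤ n) (z : Fin (2 * n)) (K : Finset (Fin (2 * n)))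
    (hKc : K.card = n - 2) {g : MvPolynomial (Fin (2 * n)) ℚ}
    (hg : g ∈ Ideal.span
      ({f | ∃ i : Fin (2 * n), f = X i ^ 2} ∪
       {f | ∃ T : Finset (Fin (2 * n)), z ∉ T ∧ T.card = n ∧ f = esF T (n - 1)})) :
    coeff (ind (insert z K)) g = 0 := by
  set d := ind (insert z K) with hd
  suffices h : ∀ p, coeff d (p * g) = 0 by simpa using h 1
  refine Submodule.span_induction (p := fun g _ => ∀ p, coeff d (p * g) = 0)
    ?_ ?_ ?_ ?_ hg
  · rintro x (⟨i, rfl⟩ | ⟨T, hzT, hTc, rfl⟩) p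
    · rw [sq, ← mul_assoc, MvPolynomial.coeff_mul_X']
      split_ifs with h1
      · rw [MvPolynomial.coeff_mul_X', if_neg]
        intro hmem
        rw [Finsupp.mem_support_iff, Finsupp.tsub_apply, Finsupp.single_eq_same] at hmem
        rw [Finsupp.mem_support_iff] at h1
        have hle : d i ≤ 1 := by rw [hd, ind_apply]; split <;> omega
        omega
      · rfl
    · rw [esF, Finset.mul_sum, MvPolynomial.coeff_sum]
      apply Finset.sum_eq_zero
      intro J hJ
      rw [mem_powersetCard] at hJ
      rw [← monomial_ind J, MvPolynomial.coeff_mul_monomial', if_neg]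
      intro hle
      rw [hd, ind_le_iff] at hle
      have hzJ : z ∉ J := fun h => hzT (hJ.1 h)
      have hJK : J ⊆ K := by
        intro x hx
        rcases Finset.mem_insert.mp (hle hx) with h | h
        · exact absurd (h ▸ hx) hzJ
        · exact h
      have := Finset.card_le_card hJK
      rw [hJ.2, hKc] at this
      omega
  · intro p; rw [mul_zero, MvPolynomial.coeff_zero]
  · intro x y _ _ hx hy p
    rw [mul_add, MvPolynomial.coeff_add, hx p, hy p, add_zero]
  · intro r x _ hx p
    rw [smul_eq_mul, ← mul_assoc]
    exact hx (p * r)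

lemma expandPow {N m : ℕ} (a : Fin N → ℚ) :
    (∑ i, C (a i) * X i) ^ m
      = ∑ k ∈ piAntidiag (univ : Finset (Fin N)) m,
          monomial (Finsupp.equivFunOnFinite.symm k)
            ((Nat.multinomial univ k : ℚ) * ∏ i, a i ^ k i) := by
  rw [Finset.sum_pow_eq_sum_piAntidiag]
  apply Finset.sum_congr rfl
  intro k hk
  have h1 : ∏ i, (C (a i) * X i) ^ k i
      = C (∏ i, a i ^ k i) * ∏ i, X i ^ k i := by
    rw [map_prod, ← Finset.prod_mul_distrib]
    apply Finset.prod_congr rfl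
    intro i _
    rw [mul_pow, map_pow]
  have h2 : ∏ i, X i ^ k i = (monomial (Finsupp.equivFunOnFinite.symm k) (1 : ℚ)) := by
    rw [← prod_X_pow_eq_monomial]
    refine (Finset.prod_subset (Finset.subset_univ _) ?_).symm
    intro x _ hx
    have hx0 : k x = 0 := Finsupp.notMem_support_iff.mp hx
    rw [hx0, pow_zero]
  rw [h1, h2, ← MvPolynomial.C_eq_coe_nat, ← mul_assoc, ← map_mul, C_mul_monomial, mul_one]

/-- From the proof of Theorem 6.1: description of the set Z⁻ of (n−1)-nilpotent
degree-one elements of ℬ⁻. -/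
theorem stmt18 (n : ℕ) (hn : 3 ≤ n)
    (b : Ideal (MvPolynomial (Fin (2 * n)) ℚ))
    (hb : b = Ideal.span
      ({f | ∃ i : Fin (2 * n), f = X i ^ 2} ∪
       {f | ∃ T : Finset (Fin (2 * n)), (⟨0, by omega⟩ : Fin (2 * n)) ∉ T ∧ T.card = n ∧
          f = esF T (n - 1)}))
    (a : Fin (2 * n) → ℚ) :
    (∑ i, C (a i) * X i) ^ (n - 1) ∈ b ↔
      ∀ K : Finset (Fin (2 * n)), (⟨0, by omega⟩ : Fin (2 * n)) ∉ K → K.card = n - 2 →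
        a (⟨0, by omega⟩ : Fin (2 * n)) * ∏ k ∈ K, a k = 0 := by
  subst hb
  constructor
  · intro hmem K hzK hKc
    set z : Fin (2 * n) := ⟨0, by omega⟩ with hz
    have h0 := coeff_mem_span hn z K hKc hmem
    rw [expandPow, MvPolynomial.coeff_sum] at h0
    set d := ind (insert z K) with hd
    have hdmem : (⇑d : Fin (2 * n) → ℕ) ∈ piAntidiag (univ : Finset (Fin (2 * n))) (n - 1) := by
      rw [mem_piAntidiag]
      refine ⟨?_, fun i _ => mem_univ i⟩
      rw [hd]
      show ∑ i, ind (insert z K) i = n - 1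
      rw [ind_sum, card_insert_of_notMem hzK, hKc]
      omega
    rw [Finset.sum_eq_single_of_mem _ hdmem] at h0
    · rw [show Finsupp.equivFunOnFinite.symm (⇑d) = d from Finsupp.equivFunOnFinite.symm_apply_apply d,
        MvPolynomial.coeff_monomial, if_pos rfl] at h0
      have hmultne : ((Nat.multinomial univ (⇑d) : ℚ)) ≠ 0 :=
        Nat.cast_ne_zero.mpr (Nat.multinomial_pos _ _).ne'
      have hprod : ∏ i, a i ^ d i = 0 := by
        rcases mul_eq_zero.mp h0 with h | h
        · exact absurd h hmultne
        · exact h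
      have hprodD : ∏ i, a i ^ d i = ∏ i ∈ insert z K, a i := by
        have hdx0 : ∀ x ∈ (univ : Finset (Fin (2 * n))), x ∉ insert z K → a x ^ d x = 1 := by
          intro x _ hx
          have hx0 : d x = 0 := by rw [hd, ind_apply, if_neg hx]
          rw [hx0, pow_zero]
        have e1 := Finset.prod_subset (Finset.subset_univ (insert z K)) hdx0
        rw [← e1]
        apply Finset.prod_congr rfl
        intro x hx
        have hx1 : d x = 1 := by rw [hd, ind_apply, if_pos hx]
        rw [hx1, pow_one]
      rw [hprodD, Finset.prod_insert hzK] at hprod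
      exact hprod
    · intro k hk hkne
      rw [MvPolynomial.coeff_monomial, if_neg]
      intro heq
      apply hkne
      rw [← heq]
      rfl
  · intro H
    set z : Fin (2 * n) := ⟨0, by omega⟩ with hz
    rw [expandPow]
    apply Ideal.sum_mem
    intro k hk
    rw [mem_piAntidiag] at hk
    set kf := Finsupp.equivFunOnFinite.symm k with hkf
    have hkfa : ∀ i, kf i = k i := fun i => rfl
    by_cases hsq : ∃ i, 2 ≤ k i
    · obtain ⟨i, hi⟩ := hsq
      have h2k : Finsupp.single i 2 ≤ kf := by
        rw [Finsupp.single_le_iff, hkfa]; exact hi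
      have heq : (monomial kf) ((Nat.multinomial univ k : ℚ) * ∏ i, a i ^ k i)
          = X i ^ 2 * monomial (kf - Finsupp.single i 2)
              ((Nat.multinomial univ k : ℚ) * ∏ i, a i ^ k i) := by
        rw [MvPolynomial.X_pow_eq_monomial, monomial_mul, one_mul,
          add_tsub_cancel_of_le h2k]
      rw [heq]
      exact Ideal.mul_mem_right _ _ (Ideal.subset_span (Or.inl ⟨i, rfl⟩))
    · push_neg at hsq
      have hk1 : ∀ i, k i ≤ 1 := fun i => by have := hsq i; omega
      set S := kf.support with hS
      have hkind : kf = ind S := by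
        ext i
        rw [ind_apply, hS]
        by_cases hi : i ∈ kf.support
        · rw [if_pos hi]
          have := Finsupp.mem_support_iff.mp hi
          rw [hkfa] at this ⊢
          have := hk1 i
          omega
        · rw [if_neg hi]
          exact Finsupp.notMem_support_iff.mp hi
      have hScard : S.card = n - 1 := by
        have h1 : ∑ i, kf i = n - 1 := by
          rw [← hk.1]
          exact Finset.sum_congr rfl fun i _ => hkfa i
        rw [hkind, ind_sum] at h1
        exact h1
      have hprodS : ∏ i, a i ^ k i = ∏ i ∈ S, a i := by
        have hkx0 : ∀ x ∈ (univ : Finset (Fin (2 * n))), x ∉ S → a x ^ k x = 1 := by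
          intro x _ hx
          have hx0 : kf x = 0 := by rw [hkind, ind_apply, if_neg hx]
          rw [hkfa x] at hx0
          rw [hx0, pow_zero]
        have e1 := Finset.prod_subset (Finset.subset_univ S) hkx0
        rw [← e1]
        apply Finset.prod_congr rfl
        intro x hx
        have hx1 : kf x = 1 := by rw [hkind, ind_apply, if_pos hx]
        rw [hkfa x] at hx1
        rw [hx1, pow_one]
      by_cases hzS : z ∈ S
      · have hzero : ∏ i, a i ^ k i = 0 := by
          rw [hprodS, ← Finset.mul_prod_erase S a hzS]
          have := H (S.erase z) (notMem_erase z S)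
            (by rw [card_erase_of_mem hzS, hScard]; omega)
          exact this
        rw [hzero, mul_zero, map_zero]
        exact Ideal.zero_mem _
      · have hkey : monomial (ind S) (1 : ℚ) ∈ Ideal.span
            ({f | ∃ i : Fin (2 * n), f = X i ^ 2} ∪
             {f | ∃ T : Finset (Fin (2 * n)), z ∉ T ∧ T.card = n ∧ f = esF T (n - 1)}) := by
          rw [← key_identity n hn z S hzS hScard]
          apply Ideal.sum_mem
          intro T hT
          rw [mem_powersetCard] at hT
          have hzT : z ∉ T := fun h => (mem_erase.mp (hT.1 h)).1 rfl
          exact Ideal.mul_mem_left _ _ (Ideal.subset_span (Or.inr ⟨T, hzT, hT.2, rfl⟩))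
        have heq : (monomial kf) ((Nat.multinomial univ k : ℚ) * ∏ i, a i ^ k i)
            = C ((Nat.multinomial univ k : ℚ) * ∏ i, a i ^ k i) * monomial (ind S) 1 := by
          rw [C_mul_monomial, mul_one, hkind]
        rw [heq]
        exact Ideal.mul_mem_left _ _ hkey

end
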